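/- arXiv:1609.06421 — 5 statements merged into one kernel-verified Lean document; each statement's English description precedes it below -/
import Mathlib

section
/- Let S : H → L² be a bounded linear operator and φ̇ : H → ℝ a nonzero bounded linear functional with Riesz representer r_φ. If r_φ ∈ R(S*), say r_φ = S*g with g ∈ L², then the generalized information I_φ := inf { ‖Sb‖² / (φ̇(b))² : b ∈ H, φ̇(b) ≠ 0, |φ̇(b)| ≤ 1 } is positive; in fact I_φ ≥ 1/‖g‖². -/
/-- If `r_φ = S*g`, then the Fisher information
`I_φ = inf { ‖Sb‖²/(φ̇ b)² : 0 < |φ̇ b| ≤ 1 }` satisfies `I_φ ≥ 1/‖g‖² > 0`. -/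
theorem stmt3 {H L : Type*} [NormedAddCommGroup H] [InnerProductSpace ℝ H] [CompleteSpace H]
    [NormedAddCommGroup L] [InnerProductSpace ℝ L] [CompleteSpace L]
    (S : H →L[ℝ] L) (r : H) (g : L) (hr : r ≠ 0)
    (hg : ContinuousLinearMap.adjoint S g = r) :
    1 / ‖g‖ ^ 2 ≤
        sInf {c : ℝ | ∃ b : H, (inner ℝ b r : ℝ) ≠ 0 ∧ |(inner ℝ b r : ℝ)| ≤ 1 ∧
          c = ‖S b‖ ^ 2 / (inner ℝ b r : ℝ) ^ 2} ∧
      0 < sInf {c : ℝ | ∃ b : H, (inner ℝ b r : ℝ) ≠ 0 ∧ |(inner ℝ b r : ℝ)| ≤ 1 ∧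
          c = ‖S b‖ ^ 2 / (inner ℝ b r : ℝ) ^ 2} := by
  have hgne : g ≠ 0 := by
    rintro rfl
    simp at hg
    exact hr hg.symm
  have hgpos : (0:ℝ) < ‖g‖ ^ 2 := pow_pos (norm_pos_iff.mpr hgne) 2
  have hbound : (0:ℝ) < 1 / ‖g‖ ^ 2 := by positivity
  have hne : Set.Nonempty {c : ℝ | ∃ b : H, (inner ℝ b r : ℝ) ≠ 0 ∧ |(inner ℝ b r : ℝ)| ≤ 1 ∧
      c = ‖S b‖ ^ 2 / (inner ℝ b r : ℝ) ^ 2} := by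
    refine ⟨_, (‖r‖ ^ 2)⁻¹ • r, ?_, ?_, rfl⟩
    · have : (inner ℝ ((‖r‖ ^ 2)⁻¹ • r) r : ℝ) = (‖r‖ ^ 2)⁻¹ * ‖r‖ ^ 2 := by
        rw [real_inner_smul_left, real_inner_self_eq_norm_sq]
      rw [this, inv_mul_cancel₀ (pow_ne_zero 2 (norm_ne_zero_iff.mpr hr))]
      norm_num
    · have : (inner ℝ ((‖r‖ ^ 2)⁻¹ • r) r : ℝ) = (‖r‖ ^ 2)⁻¹ * ‖r‖ ^ 2 := by
        rw [real_inner_smul_left, real_inner_self_eq_norm_sq]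
      rw [this, inv_mul_cancel₀ (pow_ne_zero 2 (norm_ne_zero_iff.mpr hr))]
      norm_num
  have hmain : 1 / ‖g‖ ^ 2 ≤ sInf {c : ℝ | ∃ b : H, (inner ℝ b r : ℝ) ≠ 0 ∧
      |(inner ℝ b r : ℝ)| ≤ 1 ∧ c = ‖S b‖ ^ 2 / (inner ℝ b r : ℝ) ^ 2} := by
    apply le_csInf hne
    rintro c ⟨b, hb0, _, rfl⟩
    have hinner : (inner ℝ b r : ℝ) = inner ℝ (S b) g := by
      rw [← hg, ContinuousLinearMap.adjoint_inner_right]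
    have hcs : |(inner ℝ b r : ℝ)| ≤ ‖S b‖ * ‖g‖ := by
      rw [hinner]; exact abs_real_inner_le_norm _ _
    have hsq : (inner ℝ b r : ℝ) ^ 2 ≤ ‖S b‖ ^ 2 * ‖g‖ ^ 2 := by
      rw [← mul_pow, ← sq_abs]
      exact pow_le_pow_left₀ (abs_nonneg _) hcs 2
    have hbpos : (0:ℝ) < (inner ℝ b r : ℝ) ^ 2 := by positivity
    rw [div_le_div_iff₀ hgpos hbpos]
    linarith
  exact ⟨hmain, lt_of_lt_of_le hbound hmain⟩
end

section
/- Let S : H → L² be a bounded linear operator and φ̇ : H → ℝ a bounded linear functional with Riesz representer r_φ. If r_φ ∉ R(S*), then the Fisher information I_φ := inf { ‖Sb‖² / (φ̇(b))² : b ∈ H, 0 < |φ̇(b)| ≤ 1 } equals zero. -/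
/-- If `r_φ ∉ R(S*)`, the Fisher information
`I_φ = inf { ‖Sb‖²/(φ̇ b)² : 0 < |φ̇ b| ≤ 1 }` is zero. -/
theorem stmt4 {H L : Type*} [NormedAddCommGroup H] [InnerProductSpace ℝ H] [CompleteSpace H]
    [NormedAddCommGroup L] [InnerProductSpace ℝ L] [CompleteSpace L]
    (S : H →L[ℝ] L) (r : H)
    (hr : r ∉ LinearMap.range (ContinuousLinearMap.adjoint S : L →ₗ[ℝ] H)) :
    sInf {c : ℝ | ∃ b : H, (inner ℝ b r : ℝ) ≠ 0 ∧ |(inner ℝ b r : ℝ)| ≤ 1 ∧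
        c = ‖S b‖ ^ 2 / (inner ℝ b r : ℝ) ^ 2} = 0 := by
  set A : Set ℝ := {c : ℝ | ∃ b : H, (inner ℝ b r : ℝ) ≠ 0 ∧ |(inner ℝ b r : ℝ)| ≤ 1 ∧
      c = ‖S b‖ ^ 2 / (inner ℝ b r : ℝ) ^ 2} with hA
  have hAnonneg : ∀ x ∈ A, (0:ℝ) ≤ x := by
    rintro x ⟨b, -, -, rfl⟩
    positivity
  have hbdd : BddBelow A := ⟨0, hAnonneg⟩
  refine le_antisymm ?_ (Real.sInf_nonneg hAnonneg)
  by_contra hpos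
  push_neg at hpos
  set c := sInf A with hc
  -- key quadratic inequality for all b
  have key : ∀ b : H, c * (inner ℝ b r : ℝ) ^ 2 ≤ ‖S b‖ ^ 2 := by
    intro b
    by_cases hx : (inner ℝ b r : ℝ) = 0
    · rw [hx]; nlinarith [sq_nonneg ‖S b‖]
    · set x : ℝ := (inner ℝ b r : ℝ) with hxdef
      have hmem : ‖S (x⁻¹ • b)‖ ^ 2 / (inner ℝ (x⁻¹ • b) r : ℝ) ^ 2 ∈ A := by
        refine ⟨x⁻¹ • b, ?_, ?_, rfl⟩
        · rw [real_inner_smul_left, ← hxdef, inv_mul_cancel₀ hx]; norm_num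
        · rw [real_inner_smul_left, ← hxdef, inv_mul_cancel₀ hx]; norm_num
      have hle : c ≤ ‖S (x⁻¹ • b)‖ ^ 2 / (inner ℝ (x⁻¹ • b) r : ℝ) ^ 2 :=
        csInf_le hbdd hmem
      have h1 : (inner ℝ (x⁻¹ • b) r : ℝ) = 1 := by
        rw [real_inner_smul_left, ← hxdef, inv_mul_cancel₀ hx]
      rw [h1, one_pow, div_one, map_smul, norm_smul, mul_pow] at hle
      have hx2 : (0:ℝ) < x ^ 2 := by positivity
      have : ‖x⁻¹‖ ^ 2 = (x ^ 2)⁻¹ := by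
        rw [Real.norm_eq_abs, sq_abs, ← inv_pow]
      rw [this] at hle
      calc c * x ^ 2 ≤ (x ^ 2)⁻¹ * ‖S b‖ ^ 2 * x ^ 2 := by nlinarith
        _ = ‖S b‖ ^ 2 := by field_simp
  have hcpos : 0 < c := hpos
  -- r vanishes on ker S
  have hker : LinearMap.ker (S : H →ₗ[ℝ] L) ≤
      LinearMap.ker ((innerSL ℝ r).toLinearMap) := by
    intro b hb
    have hb' : S b = 0 := hb
    have := key b
    rw [hb'] at this
    simp only [norm_zero] at this
    have : (inner ℝ b r : ℝ) = 0 := by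
      by_contra h
      have h2 : 0 < (inner ℝ b r : ℝ) ^ 2 := by positivity
      nlinarith
    simp only [LinearMap.mem_ker, ContinuousLinearMap.coe_coe, innerSL_apply_apply]
    rw [real_inner_comm]; exact this
  set p : Submodule ℝ L := LinearMap.range (S : H →ₗ[ℝ] L) with hp
  set e := LinearMap.quotKerEquivRange (S : H →ₗ[ℝ] L) with he
  set fl : p →ₗ[ℝ] ℝ :=
    ((LinearMap.ker (S : H →ₗ[ℝ] L)).liftQ (innerSL ℝ r).toLinearMap hker) ∘ₗ
      e.symm.toLinearMap with hfl
  have hflval : ∀ (b : H) (hm : S b ∈ p), fl ⟨S b, hm⟩ = (inner ℝ b r : ℝ) := by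
    intro b hm
    have hsymm : e.symm ⟨S b, hm⟩ = Submodule.Quotient.mk b := by
      apply e.injective
      rw [LinearEquiv.apply_symm_apply]
      exact Subtype.ext (LinearMap.quotKerEquivRange_apply_mk _ b).symm
    simp only [hfl, LinearMap.coe_comp, Function.comp_apply, LinearEquiv.coe_toLinearMap,
      hsymm, Submodule.liftQ_apply, ContinuousLinearMap.coe_coe, innerSL_apply_apply]
    exact real_inner_comm b r
  have hsq : 0 < Real.sqrt c := Real.sqrt_pos.mpr hcpos
  have hbound : ∀ y : p, ‖fl y‖ ≤ (Real.sqrt c)⁻¹ * ‖y‖ := by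
    rintro ⟨y, hy⟩
    obtain ⟨b, rfl⟩ := hy
    have hm : S b ∈ p := ⟨b, rfl⟩
    have hval : fl ⟨S b, hm⟩ = (inner ℝ b r : ℝ) := hflval b hm
    have h1 : (Real.sqrt c * |(inner ℝ b r : ℝ)|) ^ 2 ≤ ‖S b‖ ^ 2 := by
      rw [mul_pow, Real.sq_sqrt hcpos.le, sq_abs]; exact key b
    have h2 : Real.sqrt c * |(inner ℝ b r : ℝ)| ≤ ‖S b‖ := by
      nlinarith [norm_nonneg (S b), abs_nonneg (inner ℝ b r : ℝ)]
    show ‖fl ⟨S b, hm⟩‖ ≤ (Real.sqrt c)⁻¹ * ‖(⟨S b, hm⟩ : p)‖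
    have hyn : ‖(⟨S b, hm⟩ : p)‖ = ‖S b‖ := rfl
    rw [hval, hyn, Real.norm_eq_abs]
    have h3 := mul_le_mul_of_nonneg_left h2 (inv_nonneg.mpr hsq.le)
    have h4 : (Real.sqrt c)⁻¹ * Real.sqrt c = 1 := inv_mul_cancel₀ hsq.ne'
    nlinarith [abs_nonneg (inner ℝ b r : ℝ)]
  set fc : p →L[ℝ] ℝ := fl.mkContinuous _ hbound with hfc
  obtain ⟨g, hg, -⟩ := exists_extension_norm_eq p fc
  set u := (InnerProductSpace.toDual ℝ L).symm g with hu
  have hgu : ∀ x : L, (inner ℝ u x : ℝ) = g x := fun x =>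
    InnerProductSpace.toDual_symm_apply
  have hTu : ContinuousLinearMap.adjoint S u = r := by
    apply ext_inner_left ℝ
    intro b
    rw [ContinuousLinearMap.adjoint_inner_right]
    have hm : S b ∈ p := ⟨b, rfl⟩
    calc (inner ℝ (S b) u : ℝ) = g (S b) := by rw [real_inner_comm]; exact hgu (S b)
      _ = fc ⟨S b, hm⟩ := hg ⟨S b, hm⟩
      _ = fl ⟨S b, hm⟩ := rfl
      _ = (inner ℝ b r : ℝ) := hflval b hm
  exact hr ⟨u, hTu⟩
end

section
/- Let S : H → L² be compact with singular system {λ_j, φ_j, ψ_j}, and let 0 < β ≤ 1. Suppose r_φ ∈ cl(R(S*)) satisfies ‖r_φ‖_β² := Σ_j λ_j^{-2β} ⟨r_φ, φ_j⟩² < ∞. Then for all b ∈ H with ‖b‖_H ≤ 1, |⟨b, r_φ⟩| ≤ ‖r_φ‖_β · ‖Sb‖^β. In particular the generalized information I_{φ,ρ} with ρ = 1/β is positive. -/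
lemma holder_tsum {f g : ℕ → ℝ} (hf0 : ∀ j, 0 ≤ f j) (hg0 : ∀ j, 0 ≤ g j)
    (hf : Summable f) (hg : Summable g) {θ : ℝ} (hθ0 : 0 < θ) (hθ1 : θ ≤ 1) :
    Summable (fun j => f j ^ θ * g j ^ (1 - θ)) ∧
      ∑' j, f j ^ θ * g j ^ (1 - θ) ≤ (∑' j, f j) ^ θ * (∑' j, g j) ^ (1 - θ) := by
  have hw1 : (0:ℝ) ≤ θ := hθ0.le
  have hw2 : (0:ℝ) ≤ 1 - θ := by linarith
  have hterm0 : ∀ j, 0 ≤ f j ^ θ * g j ^ (1 - θ) := fun j =>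
    mul_nonneg (Real.rpow_nonneg (hf0 j) _) (Real.rpow_nonneg (hg0 j) _)
  have hAM : ∀ j, f j ^ θ * g j ^ (1 - θ) ≤ θ * f j + (1 - θ) * g j := fun j =>
    Real.geom_mean_le_arith_mean2_weighted hw1 hw2 (hf0 j) (hg0 j) (by ring)
  have hsummable : Summable (fun j => f j ^ θ * g j ^ (1 - θ)) :=
    Summable.of_nonneg_of_le hterm0 hAM ((hf.mul_left θ).add (hg.mul_left (1 - θ)))
  refine ⟨hsummable, ?_⟩
  set X := ∑' j, f j with hX
  set Y := ∑' j, g j with hY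
  have hX0 : 0 ≤ X := tsum_nonneg hf0
  have hY0 : 0 ≤ Y := tsum_nonneg hg0
  rcases hX0.eq_or_lt with hX0' | hXpos
  · have hfz : ∀ j, f j = 0 := fun j => by
      have h := Summable.le_tsum hf j fun i _ => hf0 i
      rw [← hX, ← hX0'] at h
      exact le_antisymm h (hf0 j)
    have : ∀ j, f j ^ θ * g j ^ (1 - θ) = 0 := fun j => by
      rw [hfz j, Real.zero_rpow hθ0.ne', zero_mul]
    rw [tsum_congr this, tsum_zero]
    exact mul_nonneg (Real.rpow_nonneg hX0 _) (Real.rpow_nonneg hY0 _)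
  rcases hY0.eq_or_lt with hY0' | hYpos
  · have hgz : ∀ j, g j = 0 := fun j => by
      have h := Summable.le_tsum hg j fun i _ => hg0 i
      rw [← hY, ← hY0'] at h
      exact le_antisymm h (hg0 j)
    rcases eq_or_lt_of_le hθ1 with hθ1' | hθlt
    · subst hθ1'
      have : ∀ j, f j ^ (1:ℝ) * g j ^ (1 - 1:ℝ) = f j := fun j => by
        rw [sub_self, Real.rpow_zero, Real.rpow_one, mul_one]
      rw [tsum_congr this, ← hX, sub_self, Real.rpow_zero, Real.rpow_one, mul_one]
    · have : ∀ j, f j ^ θ * g j ^ (1 - θ) = 0 := fun j => by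
        rw [hgz j, Real.zero_rpow (by linarith), mul_zero]
      rw [tsum_congr this, tsum_zero]
      exact mul_nonneg (Real.rpow_nonneg hX0 _) (Real.rpow_nonneg hY0 _)
  · -- main case
    have hC : 0 < X ^ θ * Y ^ (1 - θ) :=
      mul_pos (Real.rpow_pos_of_pos hXpos _) (Real.rpow_pos_of_pos hYpos _)
    have hterm : ∀ j, f j ^ θ * g j ^ (1 - θ) ≤
        X ^ θ * Y ^ (1 - θ) * (θ / X * f j + (1 - θ) / Y * g j) := by
      intro j
      have h1 : (f j / X) ^ θ * (g j / Y) ^ (1 - θ) ≤ θ * (f j / X) + (1 - θ) * (g j / Y) :=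
        Real.geom_mean_le_arith_mean2_weighted hw1 hw2 (div_nonneg (hf0 j) hX0)
          (div_nonneg (hg0 j) hY0) (by ring)
      rw [Real.div_rpow (hf0 j) hX0, Real.div_rpow (hg0 j) hY0] at h1
      have h2 := mul_le_mul_of_nonneg_left h1 hC.le
      calc f j ^ θ * g j ^ (1 - θ)
          = X ^ θ * Y ^ (1 - θ) * (f j ^ θ / X ^ θ * (g j ^ (1 - θ) / Y ^ (1 - θ))) := by
            field_simp
        _ ≤ X ^ θ * Y ^ (1 - θ) * (θ * (f j / X) + (1 - θ) * (g j / Y)) := h2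
        _ = X ^ θ * Y ^ (1 - θ) * (θ / X * f j + (1 - θ) / Y * g j) := by ring
    have hsum2 : Summable (fun j => X ^ θ * Y ^ (1 - θ) * (θ / X * f j + (1 - θ) / Y * g j)) :=
      ((hf.mul_left (θ / X)).add (hg.mul_left ((1 - θ) / Y))).mul_left _
    have := Summable.tsum_le_tsum hterm hsummable hsum2
    refine this.trans (le_of_eq ?_)
    rw [tsum_mul_left, Summable.tsum_add (hf.mul_left _) (hg.mul_left _), tsum_mul_left, tsum_mul_left]
    rw [← hX, ← hY, div_mul_cancel₀ _ hXpos.ne', div_mul_cancel₀ _ hYpos.ne']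
    ring


lemma hasSum_of_mem_closure_span {H : Type*} [NormedAddCommGroup H] [InnerProductSpace ℝ H]
    [CompleteSpace H] {φv : ℕ → H} (hON : Orthonormal ℝ φv) {r : H}
    (hr : r ∈ (Submodule.span ℝ (Set.range φv)).topologicalClosure) :
    HasSum (fun j => (inner ℝ (φv j) r : ℝ) • φv j) r := by
  set p := Submodule.span ℝ (Set.range φv) with hp
  set K := p.topologicalClosure with hK
  haveI : CompleteSpace K := (Submodule.isClosed_topologicalClosure p).completeSpace_coe
  have hmem : ∀ j, φv j ∈ K := fun j =>
    Submodule.le_topologicalClosure p (Submodule.subset_span ⟨j, rfl⟩)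
  set v' : ℕ → K := Set.codRestrict φv K hmem with hv'
  have hON' : Orthonormal ℝ v' := hON.codRestrict K hmem
  have hmap : (Submodule.span ℝ (Set.range v')).map K.subtype = p := by
    rw [Submodule.map_span, ← Set.range_comp]
    have : (K.subtype : K → H) ∘ v' = φv := rfl
    rw [this]
  have hsp : ⊤ ≤ (Submodule.span ℝ (Set.range v')).topologicalClosure := by
    rintro ⟨x, hx⟩ -
    have hx' : x ∈ closure (p : Set H) := hx
    rw [mem_closure_iff_seq_limit] at hx'
    obtain ⟨u, hu, hulim⟩ := hx'
    set z : ℕ → K := fun n => ⟨u n, Submodule.le_topologicalClosure p (hu n)⟩ with hz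
    have hzmem : ∀ n, z n ∈ (Submodule.span ℝ (Set.range v') : Set K) := by
      intro n
      have : u n ∈ (Submodule.span ℝ (Set.range v')).map K.subtype := by
        rw [hmap]; exact hu n
      obtain ⟨w, hw, hw'⟩ := this
      have : w = z n := Subtype.ext hw'
      rwa [← this]
    have hztend : Filter.Tendsto z Filter.atTop (nhds (⟨x, hx⟩ : K)) :=
      tendsto_subtype_rng.mpr hulim
    exact mem_closure_iff_seq_limit.mpr ⟨z, hzmem, hztend⟩
  set b' : HilbertBasis ℕ ℝ K := HilbertBasis.mk hON' hsp with hb'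
  have hcoe : ∀ i, (b' i : H) = φv i := by
    intro i
    rw [hb', HilbertBasis.coe_mk]
    rfl
  have hproj : (K.orthogonalProjectionOnto r : H) = r := by
    have := Submodule.starProjection_eq_self_iff.mpr hr
    rwa [Submodule.starProjection_apply] at this
  have h1 := (b'.hasSum_orthogonalProjection r).mapL K.subtypeL
  simp only [ContinuousLinearMap.map_smul, Submodule.coe_subtypeL', Submodule.subtype_apply,
    hcoe, hproj] at h1
  exact h1


/-- Source-condition bound: if `‖r‖_β² = Σ_j λ_j^{-2β} ⟨r, φ_j⟩² < ∞` for `0 < β ≤ 1`,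
then `|⟨b, r⟩| ≤ ‖r‖_β ‖Sb‖^β` for all `‖b‖ ≤ 1`; in particular the generalized
information `I_{φ,ρ}` with `ρ = 1/β` is positive. -/
theorem stmt9 {H L : Type*} [NormedAddCommGroup H] [InnerProductSpace ℝ H] [CompleteSpace H]
    [NormedAddCommGroup L] [InnerProductSpace ℝ L] [CompleteSpace L]
    (S : H →L[ℝ] L) (hS : IsCompactOperator (S : H → L))
    (lam : ℕ → ℝ) (φv : ℕ → H) (ψv : ℕ → L)
    (hlam : ∀ j, 0 < lam j)
    (hSφ : ∀ j, S (φv j) = lam j • ψv j)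
    (hSψ : ∀ j, ContinuousLinearMap.adjoint S (ψv j) = lam j • φv j)
    (hONφ : Orthonormal ℝ φv) (hONψ : Orthonormal ℝ ψv)
    (hbasis : (Submodule.span ℝ (Set.range φv)).topologicalClosure =
      (LinearMap.range ((ContinuousLinearMap.adjoint S : L →L[ℝ] H) : L →ₗ[ℝ] H)).topologicalClosure)
    (β : ℝ) (hβ0 : 0 < β) (hβ1 : β ≤ 1)
    (r : H) (hr0 : r ≠ 0)
    (hr : r ∈ closure ((LinearMap.range ((ContinuousLinearMap.adjoint S : L →L[ℝ] H) : L →ₗ[ℝ] H) : Submodule ℝ H) : Set H))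
    (hsum : Summable (fun j => lam j ^ (-(2 * β)) * (inner ℝ r (φv j) : ℝ) ^ 2)) :
    (∀ b : H, ‖b‖ ≤ 1 → |(inner ℝ b r : ℝ)| ≤
        Real.sqrt (∑' j, lam j ^ (-(2 * β)) * (inner ℝ r (φv j) : ℝ) ^ 2) * ‖S b‖ ^ β) ∧
      0 < sInf {c : ℝ | ∃ b : H, ‖b‖ ≤ 1 ∧ (inner ℝ b r : ℝ) ≠ 0 ∧
        c = ‖S b‖ ^ 2 / |(inner ℝ b r : ℝ)| ^ (2 * (1 / β))} := by
  have hrK : r ∈ (Submodule.span ℝ (Set.range φv)).topologicalClosure := by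
    rw [hbasis]; exact hr
  have hHS : HasSum (fun j => (inner ℝ (φv j) r : ℝ) • φv j) r :=
    hasSum_of_mem_closure_span hONφ hrK
  set F : ℕ → ℝ := fun j => lam j ^ (-(2 * β)) * (inner ℝ r (φv j) : ℝ) ^ 2 with hF
  set C2 := ∑' j, F j with hC2
  have hF0 : ∀ j, 0 ≤ F j := fun j =>
    mul_nonneg (Real.rpow_nonneg (hlam j).le _) (sq_nonneg _)
  have hC20 : 0 ≤ C2 := tsum_nonneg hF0
  -- Part 1
  have part1 : ∀ b : H, ‖b‖ ≤ 1 → |(inner ℝ b r : ℝ)| ≤ Real.sqrt C2 * ‖S b‖ ^ β := by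
    intro b hb
    set f : ℕ → ℝ := fun j => lam j ^ 2 * ((inner ℝ b (φv j) : ℝ)) ^ 2 with hf
    set g : ℕ → ℝ := fun j => ((inner ℝ b (φv j) : ℝ)) ^ 2 with hg
    have hf0 : ∀ j, 0 ≤ f j := fun j => mul_nonneg (sq_nonneg _) (sq_nonneg _)
    have hg0 : ∀ j, 0 ≤ g j := fun j => sq_nonneg _
    -- coefficients of S b
    have hc : ∀ j, (inner ℝ (ψv j) (S b) : ℝ) = lam j * (inner ℝ b (φv j) : ℝ) := by
      intro j
      rw [← ContinuousLinearMap.adjoint_inner_left S b (ψv j), hSψ j, real_inner_smul_left,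
        real_inner_comm]
    have hfsummable : Summable f := by
      have := hONψ.inner_products_summable (S b)
      simpa [hc, Real.norm_eq_abs, abs_mul, mul_pow, sq_abs] using this
    have hfsum : ∑' j, f j ≤ ‖S b‖ ^ 2 := by
      have := hONψ.tsum_inner_products_le (S b)
      simpa [hc, Real.norm_eq_abs, abs_mul, mul_pow, sq_abs] using this
    have hgsummable : Summable g := by
      have := hONφ.inner_products_summable b
      simpa [Real.norm_eq_abs, sq_abs, real_inner_comm] using this
    have hgsum : ∑' j, g j ≤ 1 := by
      have h1 := hONφ.tsum_inner_products_le b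
      have h2 : ‖b‖ ^ 2 ≤ 1 := by nlinarith [norm_nonneg b]
      calc ∑' j, g j = ∑' j, ‖(inner ℝ (φv j) b : ℝ)‖ ^ 2 := by
            apply tsum_congr; intro j
            simp [hg, Real.norm_eq_abs, sq_abs, real_inner_comm]
        _ ≤ ‖b‖ ^ 2 := h1
        _ ≤ 1 := h2
    obtain ⟨hGsummable', hGle⟩ := holder_tsum hf0 hg0 hfsummable hgsummable hβ0 hβ1
    -- identify f^β g^(1-β) with G j := lam^{2β} * bb²
    have hGid : ∀ j, f j ^ β * g j ^ (1 - β) =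
        lam j ^ (2 * β) * ((inner ℝ b (φv j) : ℝ)) ^ 2 := by
      intro j
      set t := (inner ℝ b (φv j) : ℝ)
      have h1 : f j = lam j ^ 2 * t ^ 2 := rfl
      have h2 : (lam j ^ 2 * t ^ 2 : ℝ) ^ β = lam j ^ (2 * β) * (t ^ 2) ^ β := by
        rw [Real.mul_rpow (sq_nonneg _) (sq_nonneg _)]
        congr 1
        rw [← Real.rpow_natCast (lam j) 2, ← Real.rpow_mul (hlam j).le]
        norm_num
      have h3 : (t ^ 2 : ℝ) ^ β * (t ^ 2) ^ (1 - β) = t ^ 2 := by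
        rw [← Real.rpow_add' (sq_nonneg t) (by norm_num : β + (1 - β) ≠ 0)]
        norm_num
      calc f j ^ β * g j ^ (1 - β) = lam j ^ (2 * β) * ((t ^ 2) ^ β * (t ^ 2) ^ (1 - β)) := by
            rw [h1, h2, hg]; ring
        _ = lam j ^ (2 * β) * t ^ 2 := by rw [h3]
    set G : ℕ → ℝ := fun j => lam j ^ (2 * β) * ((inner ℝ b (φv j) : ℝ)) ^ 2 with hG
    have hGsummable : Summable G := by
      rwa [funext hGid] at hGsummable'
    have hG0 : ∀ j, 0 ≤ G j := fun j =>
      mul_nonneg (Real.rpow_nonneg (hlam j).le _) (sq_nonneg _)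
    set T := ∑' j, G j with hT
    have hT0 : 0 ≤ T := tsum_nonneg hG0
    have hTle : T ≤ (‖S b‖ ^ 2) ^ β := by
      have : T = ∑' j, f j ^ β * g j ^ (1 - β) := by
        rw [hT]; exact (tsum_congr fun j => (hGid j).symm)
      rw [this]
      refine hGle.trans ?_
      have hx : (∑' j, f j) ^ β ≤ (‖S b‖ ^ 2) ^ β :=
        Real.rpow_le_rpow (tsum_nonneg hf0) hfsum hβ0.le
      have hy : (∑' j, g j) ^ (1 - β) ≤ 1 :=
        Real.rpow_le_one (tsum_nonneg hg0) hgsum (by linarith)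
      calc (∑' j, f j) ^ β * (∑' j, g j) ^ (1 - β)
          ≤ (‖S b‖ ^ 2) ^ β * 1 := by
            apply mul_le_mul hx hy (Real.rpow_nonneg (tsum_nonneg hg0) _)
              (Real.rpow_nonneg (by positivity) _)
        _ = (‖S b‖ ^ 2) ^ β := mul_one _
    -- Cauchy-Schwarz via holder with θ = 1/2
    obtain ⟨hPsummable', hPle⟩ := holder_tsum hF0 hG0 hsum hGsummable
      (by norm_num : (0:ℝ) < 1/2) (by norm_num)
    have hPid : ∀ j, F j ^ (1/2 : ℝ) * G j ^ (1 - 1/2 : ℝ) =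
        |(inner ℝ (φv j) r : ℝ) * (inner ℝ b (φv j) : ℝ)| := by
      intro j
      have h1 : (1 - 1/2 : ℝ) = 1/2 := by norm_num
      rw [h1, ← Real.mul_rpow (hF0 j) (hG0 j)]
      have h2 : F j * G j = ((inner ℝ (φv j) r : ℝ) * (inner ℝ b (φv j) : ℝ)) ^ 2 := by
        rw [hF, hG]
        have h3 : lam j ^ (-(2 * β)) * lam j ^ (2 * β) = 1 := by
          rw [← Real.rpow_add (hlam j)]; norm_num
        have h4 : (inner ℝ r (φv j) : ℝ) = (inner ℝ (φv j) r : ℝ) := real_inner_comm _ _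
        calc lam j ^ (-(2 * β)) * (inner ℝ r (φv j) : ℝ) ^ 2 *
              (lam j ^ (2 * β) * (inner ℝ b (φv j) : ℝ) ^ 2)
            = (lam j ^ (-(2 * β)) * lam j ^ (2 * β)) *
              ((inner ℝ r (φv j) : ℝ) ^ 2 * (inner ℝ b (φv j) : ℝ) ^ 2) := by ring
          _ = ((inner ℝ (φv j) r : ℝ) * (inner ℝ b (φv j) : ℝ)) ^ 2 := by
              rw [h3, h4]; ring
      rw [h2, ← Real.sqrt_eq_rpow, Real.sqrt_sq_eq_abs]
    have habs_summable : Summable (fun j => |(inner ℝ (φv j) r : ℝ) * (inner ℝ b (φv j) : ℝ)|) := by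
      rwa [funext hPid] at hPsummable'
    -- inner ℝ b r as a sum
    have hbr : HasSum (fun j => (inner ℝ (φv j) r : ℝ) * (inner ℝ b (φv j) : ℝ)) (inner ℝ b r : ℝ) := by
      have h1 := hHS.mapL (innerSL ℝ b)
      simpa [inner_smul_right, mul_comm] using h1
    have step1 : |(inner ℝ b r : ℝ)| ≤
        ∑' j, |(inner ℝ (φv j) r : ℝ) * (inner ℝ b (φv j) : ℝ)| := by
      rw [← hbr.tsum_eq]
      have h := norm_tsum_le_tsum_norm (f := fun j => (inner ℝ (φv j) r : ℝ) * (inner ℝ b (φv j) : ℝ))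
          (by simp only [Real.norm_eq_abs]; exact habs_summable)
      simp only [Real.norm_eq_abs] at h
      exact h
    have step2 : ∑' j, |(inner ℝ (φv j) r : ℝ) * (inner ℝ b (φv j) : ℝ)| ≤
        C2 ^ (1/2 : ℝ) * T ^ (1/2 : ℝ) := by
      have := hPle
      rw [funext hPid] at this
      have h12 : (1 - 1/2 : ℝ) = 1/2 := by norm_num
      rw [h12] at this
      exact this
    have step3 : T ^ (1/2 : ℝ) ≤ ‖S b‖ ^ β := by
      have h1 : T ^ (1/2 : ℝ) ≤ ((‖S b‖ ^ 2) ^ β) ^ (1/2 : ℝ) :=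
        Real.rpow_le_rpow hT0 hTle (by norm_num)
      refine h1.trans (le_of_eq ?_)
      rw [← Real.rpow_natCast ‖S b‖ 2, ← Real.rpow_mul (norm_nonneg _),
        ← Real.rpow_mul (norm_nonneg _)]
      norm_num
      congr 1
      ring
    calc |(inner ℝ b r : ℝ)| ≤ ∑' j, |(inner ℝ (φv j) r : ℝ) * (inner ℝ b (φv j) : ℝ)| := step1
      _ ≤ C2 ^ (1/2 : ℝ) * T ^ (1/2 : ℝ) := step2
      _ ≤ C2 ^ (1/2 : ℝ) * ‖S b‖ ^ β := by
          apply mul_le_mul_of_nonneg_left step3 (Real.rpow_nonneg hC20 _)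
      _ = Real.sqrt C2 * ‖S b‖ ^ β := by rw [Real.sqrt_eq_rpow]
  refine ⟨part1, ?_⟩
  -- C2 > 0
  have hC2pos : 0 < C2 := by
    rcases hC20.eq_or_lt with h0 | h
    · exfalso
      have hFz : ∀ j, F j = 0 := fun j => by
        have h1 := Summable.le_tsum hsum j fun i _ => hF0 i
        have h2 : F j ≤ 0 := by rw [← hC2, ← h0] at h1; exact h1
        exact le_antisymm h2 (hF0 j)
      have hz : ∀ j, (inner ℝ (φv j) r : ℝ) = 0 := by
        intro j
        have := hFz j
        rw [hF] at this
        have hl : (0:ℝ) < lam j ^ (-(2 * β)) := Real.rpow_pos_of_pos (hlam j) _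
        have : (inner ℝ r (φv j) : ℝ) ^ 2 = 0 := by
          by_contra hne
          have : 0 < lam j ^ (-(2 * β)) * (inner ℝ r (φv j) : ℝ) ^ 2 :=
            mul_pos hl (lt_of_le_of_ne (sq_nonneg _) (Ne.symm hne))
          simp only [hF] at hFz
          nlinarith [hFz j]
        have := pow_eq_zero_iff (n := 2) (by norm_num) |>.mp this
        rw [real_inner_comm]
        exact this
      have : (fun j => (inner ℝ (φv j) r : ℝ) • φv j) = fun _ => (0 : H) := by
        funext j; rw [hz j, zero_smul]
      rw [this] at hHS
      exact hr0 (hHS.unique hasSum_zero)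
    · exact h
  have hCpos : 0 < Real.sqrt C2 := Real.sqrt_pos.mpr hC2pos
  set C := Real.sqrt C2 with hCdef
  set D := C ^ (2 * (1 / β)) with hD
  have hDpos : 0 < D := Real.rpow_pos_of_pos hCpos _
  set M := {c : ℝ | ∃ b : H, ‖b‖ ≤ 1 ∧ (inner ℝ b r : ℝ) ≠ 0 ∧
      c = ‖S b‖ ^ 2 / |(inner ℝ b r : ℝ)| ^ (2 * (1 / β))} with hM
  have hMne : M.Nonempty := by
    refine ⟨‖S (‖r‖⁻¹ • r)‖ ^ 2 / |(inner ℝ (‖r‖⁻¹ • r) r : ℝ)| ^ (2 * (1 / β)),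
      ‖r‖⁻¹ • r, ?_, ?_, rfl⟩
    · rw [norm_smul]
      have : ‖r‖ ≠ 0 := norm_ne_zero_iff.mpr hr0
      simp [Real.norm_eq_abs, abs_of_nonneg (inv_nonneg.mpr (norm_nonneg r)),
        inv_mul_cancel₀ this]
    · rw [real_inner_smul_left, real_inner_self_eq_norm_sq]
      have : ‖r‖ ≠ 0 := norm_ne_zero_iff.mpr hr0
      positivity
  have hlb : ∀ c ∈ M, 1 / D ≤ c := by
    rintro c ⟨b, hb, hbr0, rfl⟩
    have h1 : |(inner ℝ b r : ℝ)| ≤ C * ‖S b‖ ^ β := part1 b hb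
    have hSb : 0 < ‖S b‖ := by
      rcases (norm_nonneg (S b)).eq_or_lt with h | h
      · exfalso
        rw [← h, Real.zero_rpow hβ0.ne', mul_zero] at h1
        exact hbr0 (abs_eq_zero.mp (le_antisymm h1 (abs_nonneg _)))
      · exact h
    set P := |(inner ℝ b r : ℝ)| ^ (2 * (1 / β)) with hP
    have hPpos : 0 < P := Real.rpow_pos_of_pos (abs_pos.mpr hbr0) _
    have h2 : P ≤ D * ‖S b‖ ^ 2 := by
      have h3 : P ≤ (C * ‖S b‖ ^ β) ^ (2 * (1 / β)) :=
        Real.rpow_le_rpow (abs_nonneg _) h1 (by positivity)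
      refine h3.trans (le_of_eq ?_)
      rw [Real.mul_rpow hCpos.le (Real.rpow_nonneg (norm_nonneg _) _),
        ← Real.rpow_natCast ‖S b‖ 2, ← Real.rpow_mul (norm_nonneg _)]
      congr 2
      field_simp
      norm_num
    rw [div_le_div_iff₀ hDpos hPpos]
    nlinarith
  have hsInf : 1 / D ≤ sInf M := le_csInf hMne hlb
  have : (0:ℝ) < 1 / D := by positivity
  linarith
end

section
/- Let A : E → E be a compact operator on a Hilbert space E with adjoint A*, let θ₀ > 0, and suppose g₀ ∈ E satisfies θ₀ A*g₀ = g₀ (g₀ is an eigenfunction of A* with eigenvalue 1/θ₀). Let η₀ ∈ E with ⟨η₀, g₀⟩ ≠ 0. Define the operator S : ℝ × E → E by S(b_θ, b_η) = b_θ · Aη₀ + (θ₀ A b_η − b_η). Then there exists g ∈ E with ⟨Aη₀, g⟩ = 1 and θ₀ A*g − g = 0; consequently the functional (b_θ, b_η) ↦ b_θ is continuous with respect to the seminorm ‖S(b_θ,b_η)‖, i.e., |b_θ| ≤ ‖g‖·‖S(b_θ,b_η)‖ for all (b_θ, b_η). -/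
/-- Euler equation (Proposition 11): if `g₀` is an eigenfunction of `A*` with eigenvalue
`1/θ₀` (i.e. `θ₀ A* g₀ = g₀`) and `⟨η₀, g₀⟩ ≠ 0`, then there is `g` with `⟨Aη₀, g⟩ = 1`
and `θ₀ A* g − g = 0`, so that `|b_θ| ≤ ‖g‖ ‖S(b_θ, b_η)‖` for the score
`S(b_θ, b_η) = b_θ Aη₀ + (θ₀ • A bη - bη)`. -/
theorem stmt17 {E : Type*} [NormedAddCommGroup E] [InnerProductSpace ℝ E] [CompleteSpace E]
    (A : E →L[ℝ] E) (hA : IsCompactOperator (A : E → E))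
    (θ₀ : ℝ) (hθ : 0 < θ₀) (g₀ η₀ : E)
    (hg₀ : θ₀ • ContinuousLinearMap.adjoint A g₀ = g₀)
    (hη : (inner ℝ η₀ g₀ : ℝ) ≠ 0) :
    ∃ g : E, (inner ℝ (A η₀) g : ℝ) = 1 ∧ θ₀ • ContinuousLinearMap.adjoint A g - g = 0 ∧
      ∀ (bθ : ℝ) (bη : E), |bθ| ≤ ‖g‖ * ‖bθ • A η₀ + (θ₀ • A bη - bη)‖ := by
  set c : ℝ := θ₀ / (inner ℝ η₀ g₀ : ℝ) with hc
  refine ⟨c • g₀, ?_, ?_, ?_⟩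
  · have h1 : (inner ℝ (A η₀) g₀ : ℝ) = (inner ℝ η₀ g₀ : ℝ) / θ₀ := by
      have := ContinuousLinearMap.adjoint_inner_right A η₀ g₀
      -- ⟪A η₀, g₀⟫ = ⟪η₀, A† g₀⟫? adjust
      have h2 : (ContinuousLinearMap.adjoint A) g₀ = θ₀⁻¹ • g₀ :=
        ((inv_smul_eq_iff₀ hθ.ne').mpr hg₀.symm).symm
      rw [← this, h2, real_inner_smul_right]
      field_simp
    rw [real_inner_smul_right, h1, hc]
    field_simp
  · rw [map_smul, smul_comm, ← smul_sub, hg₀, sub_self, smul_zero]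
  · intro bθ bη
    set g := c • g₀ with hg
    have hag : (inner ℝ (A η₀) g : ℝ) = 1 := by
      have h2 : (ContinuousLinearMap.adjoint A) g₀ = θ₀⁻¹ • g₀ :=
        ((inv_smul_eq_iff₀ hθ.ne').mpr hg₀.symm).symm
      rw [hg, real_inner_smul_right, ← ContinuousLinearMap.adjoint_inner_right A η₀ g₀, h2,
        real_inner_smul_right, hc]
      field_simp
    have hadj : θ₀ • ContinuousLinearMap.adjoint A g - g = 0 := by
      rw [hg, map_smul, smul_comm, ← smul_sub, hg₀, sub_self, smul_zero]
    have key : (inner ℝ (bθ • A η₀ + (θ₀ • A bη - bη)) g : ℝ) = bθ := by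
      rw [inner_add_left, real_inner_smul_left, hag, mul_one, inner_sub_left,
        real_inner_smul_left, ← ContinuousLinearMap.adjoint_inner_right A bη g]
      have : θ₀ * (inner ℝ bη ((ContinuousLinearMap.adjoint A) g) : ℝ) - (inner ℝ bη g : ℝ)
          = (inner ℝ bη (θ₀ • (ContinuousLinearMap.adjoint A) g - g) : ℝ) := by
        simp [inner_sub_right, real_inner_smul_right]
      rw [this, hadj, inner_zero_right, add_zero]
    calc |bθ| = |(inner ℝ (bθ • A η₀ + (θ₀ • A bη - bη)) g : ℝ)| := by rw [key]
      _ ≤ ‖bθ • A η₀ + (θ₀ • A bη - bη)‖ * ‖g‖ := abs_real_inner_le_norm _ _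
      _ = ‖g‖ * ‖bθ • A η₀ + (θ₀ • A bη - bη)‖ := mul_comm _ _
end

section
/- Counterexample (nonlinear model): Let H = ℓ²-type space of real sequences λ with weights p_j > 0, Σp_j = 1, and let f : ℝ → ℝ be bounded, twice continuously differentiable with bounded second derivative, f(x) = 0 iff x ∈ {0,1}, and f'(0) = 1. Define φ(λ) = Σ_j f(λ_j) p_j and the sequences α^k with zeros in the first k coordinates and ones thereafter. Then: (a) the derivative of φ at 0 is φ̇(b) = Σ_j b_j p_j and satisfies |φ̇(b)|² ≤ Σ_j b_j² p_j, so the information I_φ ≥ 1; yet (b) φ(α^k) = 0 = φ(0) while α^k ≠ 0, so φ is not identified from the model m(λ) = (f(λ_j))_j (since m(α^k) = 0 = m(0)). -/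
/-- Counterexample: positive Fisher information does not imply identification in a
nonlinear model. With weights `p_j > 0`, `Σ p_j = 1`, and `f` bounded, `C²` with bounded
second derivative, `f(x) = 0 ↔ x ∈ {0,1}`, `f'(0) = 1`, the functional
`φ(λ) = Σ_j f(λ_j) p_j` has derivative `φ̇(b) = Σ_j b_j p_j` at `0` satisfying the
Cauchy–Schwarz bound `(Σ_j b_j p_j)² ≤ Σ_j b_j² p_j` (so `I_φ ≥ 1`), yet for each `k`
the sequence `α^k` (zeros in the first `k` coordinates, ones thereafter) is nonzero with
`φ(α^k) = 0 = φ(0)` and `m(α^k) = 0 = m(0)` coordinatewise. -/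
theorem stmt19 (p : ℕ → ℝ) (hp : ∀ j, 0 < p j) (hps : Summable p) (hp1 : ∑' j, p j = 1)
    (f : ℝ → ℝ)
    (hfb : ∃ M, ∀ x, |f x| ≤ M)
    (hf2 : ContDiff ℝ 2 f)
    (hf2b : ∃ M, ∀ x, |iteratedDeriv 2 f x| ≤ M)
    (hfz : ∀ x, f x = 0 ↔ x = 0 ∨ x = 1)
    (hf'0 : deriv f 0 = 1) :
    (∀ b : ℕ → ℝ, Summable (fun j => (b j) ^ 2 * p j) →
        (∑' j, b j * p j) ^ 2 ≤ ∑' j, (b j) ^ 2 * p j) ∧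
      ∀ k : ℕ,
        (∑' j : ℕ, f (if j < k then (0 : ℝ) else 1) * p j) = 0 ∧
        (fun j : ℕ => if j < k then (0 : ℝ) else 1) ≠ (fun _ => 0) ∧
        ∀ j : ℕ, f (if j < k then (0 : ℝ) else 1) = 0 := by
  constructor
  · intro b hb
    -- finite Cauchy–Schwarz
    have key : ∀ s : Finset ℕ,
        (∑ j ∈ s, b j * p j) ^ 2 ≤ ∑' j, (b j) ^ 2 * p j := by
      intro s
      have h1 : (∑ j ∈ s, b j * p j) ^ 2 ≤
          (∑ j ∈ s, (b j) ^ 2 * p j) * (∑ j ∈ s, p j) := by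
        have := Finset.sum_mul_sq_le_sq_mul_sq s
          (fun j => b j * Real.sqrt (p j)) (fun j => Real.sqrt (p j))
        have e1 : ∀ j ∈ s, (b j * Real.sqrt (p j)) * Real.sqrt (p j) = b j * p j := by
          intro j _
          rw [mul_assoc, Real.mul_self_sqrt (hp j).le]
        have e2 : ∀ j ∈ s, (b j * Real.sqrt (p j)) ^ 2 = (b j) ^ 2 * p j := by
          intro j _
          rw [mul_pow, Real.sq_sqrt (hp j).le]
        have e3 : ∀ j ∈ s, (Real.sqrt (p j)) ^ 2 = p j := by
          intro j _; exact Real.sq_sqrt (hp j).le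
        rwa [Finset.sum_congr rfl e1, Finset.sum_congr rfl e2,
          Finset.sum_congr rfl e3] at this
      have h2 : (∑ j ∈ s, (b j) ^ 2 * p j) ≤ ∑' j, (b j) ^ 2 * p j :=
        Summable.sum_le_tsum s (fun j _ => mul_nonneg (sq_nonneg _) (hp j).le) hb 
      have h3 : (∑ j ∈ s, p j) ≤ 1 := by
        rw [← hp1]; exact Summable.sum_le_tsum s (fun j _ => (hp j).le) hps
      have h4 : 0 ≤ ∑ j ∈ s, (b j) ^ 2 * p j :=
        Finset.sum_nonneg (fun j _ => mul_nonneg (sq_nonneg _) (hp j).le)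
      calc (∑ j ∈ s, b j * p j) ^ 2 ≤ (∑ j ∈ s, (b j) ^ 2 * p j) * (∑ j ∈ s, p j) := h1
        _ ≤ (∑' j, (b j) ^ 2 * p j) * 1 := mul_le_mul h2 h3
            (Finset.sum_nonneg (fun j _ => (hp j).le)) (h4.trans h2)
        _ = ∑' j, (b j) ^ 2 * p j := mul_one _
    -- summability of b * p
    have hsum : Summable (fun j => b j * p j) := by
      apply Summable.of_abs
      apply Summable.of_nonneg_of_le (fun j => abs_nonneg _)
        (fun j => ?_) ((hb.add hps).div_const 2)
      have : |b j * p j| = |b j * Real.sqrt (p j)| * Real.sqrt (p j) := by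
        rw [abs_mul, abs_mul, abs_of_nonneg (Real.sqrt_nonneg _),
          abs_of_nonneg (hp j).le, mul_assoc, Real.mul_self_sqrt (hp j).le]
      rw [this]
      have := abs_nonneg (b j * Real.sqrt (p j))
      nlinarith [sq_nonneg (|b j * Real.sqrt (p j)| - Real.sqrt (p j)),
        Real.sq_sqrt (hp j).le, sq_abs (b j * Real.sqrt (p j)),
        mul_pow (b j) (Real.sqrt (p j)) 2, Real.sqrt_nonneg (p j)]
    -- pass to the limit
    have ht := hsum.hasSum.tendsto_sum_nat
    have : Filter.Tendsto (fun n => (∑ j ∈ Finset.range n, b j * p j) ^ 2)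
        Filter.atTop (nhds ((∑' j, b j * p j) ^ 2)) := ht.pow 2
    exact le_of_tendsto this (Filter.Eventually.of_forall fun n => key _)
  · intro k
    have hterm : ∀ j : ℕ, f (if j < k then (0 : ℝ) else 1) = 0 := by
      intro j
      by_cases h : j < k <;> simp [h, hfz]
    refine ⟨?_, ?_, hterm⟩
    · simp only [hterm, zero_mul, tsum_zero]
    · intro h
      have := congrFun h k
      simp at this
end
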